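/- For all real z ≥ 0 and γ ≥ 2, one has z^γ/γ - 1/γ - (z-1) ≥ (1/2)(z-1)^2. -/

import Mathlib

theorem stmt0 (z γ : ℝ) (hz : 0 ≤ z) (hγ : 2 ≤ γ) :
    z ^ γ / γ - 1 / γ - (z - 1) ≥ (1 / 2) * (z - 1) ^ 2 := by
  have hγ0 : (0:ℝ) < γ := by linarith
  have hb : 1 + (γ/2) * (z - 1) ≤ z ^ (γ/2) := by
    have := one_add_mul_self_le_rpow_one_add
      (by linarith : (-1:ℝ) ≤ z - 1) (by linarith : (1:ℝ) ≤ γ/2)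
    have hz1 : (1:ℝ) + (z - 1) = z := by ring
    rwa [hz1] at this
  have hkey : 1 + γ*(z-1) + (γ/2)*(z-1)^2 ≤ z ^ γ := by
    have hw : z ^ γ = (z ^ (γ/2))^2 := by
      rw [← Real.rpow_natCast (z ^ (γ/2)) 2, ← Real.rpow_mul hz]
      norm_num
    rw [hw]
    rcases le_or_gt 0 (1 + (γ/2)*(z-1)) with h | h
    · nlinarith [pow_le_pow_left₀ h hb 2, mul_nonneg (mul_nonneg (sub_nonneg.mpr hγ) hγ0.le) (sq_nonneg (z-1))]
    · nlinarith [sq_nonneg (z ^ (γ/2)), mul_nonpos_of_nonpos_of_nonneg h.le hz,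
        sq_nonneg (z-1)]
  have h2 : (1 + γ*(z-1) + (γ/2)*(z-1)^2)/γ ≤ z^γ/γ := by gcongr
  have h3 : (1 + γ*(z-1) + (γ/2)*(z-1)^2)/γ = 1/γ + (z-1) + (1/2)*(z-1)^2 := by
    field_simp
  linarith [h2, h3.symm.le, h3.le]
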